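/- Let f : B → A be a ring homomorphism where B is a local ring, A is a nonzero ring, and f⁻¹(Jacobson radical of A) = Jacobson radical of B. Then f is a local homomorphism, i.e., every square matrix α over B whose image f(α) is invertible over A is itself invertible over B. -/
import Mathlib


/-- A ring homomorphism is *local* if it reflects invertibility of square matrices
of every size. -/
def MatLocal {B A : Type*} [Ring B] [Ring A] (f : B →+* A) : Prop :=
  ∀ (n : ℕ) (α : Matrix (Fin n) (Fin n) B), IsUnit (α.map f) → IsUnit α

section AuxStmt5

variable {B : Type*} [Ring B]

/-- In a local ring, right-invertible elements are units. -/
lemma aux_ru [IsLocalRing B] {a b : B} (hab : a * b = 1) : IsUnit a := by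
  rcases IsLocalRing.isUnit_or_isUnit_of_add_one (a := b * a) (b := 1 - b * a)
      (by noncomm_ring) with hba | h1
  · obtain ⟨u, hu⟩ := hba
    have hl : (↑u⁻¹ * b) * a = 1 := by
      rw [mul_assoc, ← hu]; exact u.inv_mul
    have hba1 : b * a = 1 := by
      have hb : ↑u⁻¹ * b = b := by
        calc ↑u⁻¹ * b = (↑u⁻¹ * b) * (a * b) := by rw [hab, mul_one]
        _ = ((↑u⁻¹ * b) * a) * b := by noncomm_ring
        _ = b := by rw [hl, one_mul]
      calc b * a = (↑u⁻¹ * b) * a := by rw [hb]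
      _ = 1 := hl
    exact ⟨⟨a, b, hab, hba1⟩, rfl⟩
  · exfalso
    have ha0 : a * (1 - b * a) = 0 := by
      have h2 : a * (b * a) = a := by rw [← mul_assoc, hab, one_mul]
      rw [mul_sub, mul_one, h2, sub_self]
    obtain ⟨u, hu⟩ := h1
    have ha : a = 0 := by
      have h3 := congrArg (· * (↑u⁻¹ : B)) ha0
      simpa [← hu, mul_assoc] using h3
    rw [ha, zero_mul] at hab
    exact one_ne_zero hab.symm

/-- In a local ring, a product with a non-unit factor on the right is a non-unit... actually:
if `y * x` is a unit then `x` is a unit. -/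
lemma aux_unit_of_mul {x y : B} [IsLocalRing B] (hxy : IsUnit (y * x)) : IsUnit x := by
  obtain ⟨u, hu⟩ := hxy
  have hy : IsUnit y := aux_ru (b := x * ↑u⁻¹) (by rw [← mul_assoc, ← hu]; exact u.mul_inv)
  obtain ⟨v, hv⟩ := hy
  have : x = ↑v⁻¹ * ↑u := by
    rw [hu, ← hv, ← mul_assoc, v.inv_mul, one_mul]
  rw [this]
  exact (v⁻¹.isUnit).mul u.isUnit

lemma aux_rad [IsLocalRing B] {x : B} (hx : ¬IsUnit x) : x ∈ Ideal.jacobson (⊥ : Ideal B) := by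
  rw [Ideal.mem_jacobson_iff]
  intro y
  have h1 : IsUnit (y * x + 1) := by
    rcases IsLocalRing.isUnit_or_isUnit_of_add_one (a := -(y * x)) (b := y * x + 1)
        (by abel) with hn | h
    · exact absurd (aux_unit_of_mul (by simpa using hn.neg)) hx
    · exact h
  obtain ⟨u, hu⟩ := h1
  refine ⟨↑u⁻¹, ?_⟩
  have : (↑u⁻¹ : B) * (y * x + 1) = 1 := by rw [← hu]; exact u.inv_mul
  have h2 : ↑u⁻¹ * y * x + ↑u⁻¹ - 1 = 0 := by
    rw [mul_assoc]
    rw [mul_add, mul_one] at this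
    rw [this, sub_self]
  simp [h2]

lemma aux_one_notmem {A : Type*} [Ring A] [Nontrivial A] :
    (1 : A) ∉ Ideal.jacobson (⊥ : Ideal A) := by
  intro h1
  have : Ideal.jacobson (⊥ : Ideal A) = ⊤ := Ideal.eq_top_iff_one _ |>.mpr h1
  rw [Ideal.jacobson_eq_top_iff] at this
  exact one_ne_zero ((Ideal.eq_top_iff_one _).mp this)

open Matrix in
lemma aux_submatrix_unit {R : Type*} [Ring R]
    {n' : Type*} [Fintype n'] [DecidableEq n'] (e : n' ≃ n') (α : Matrix n' n' R) :
    IsUnit (α.submatrix e id) ↔ IsUnit α := by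
  have key : ∀ (σ : n' ≃ n') (M : Matrix n' n' R),
      IsUnit M → IsUnit (M.submatrix σ id) := by
    intro σ M hM
    have hP : ((1 : Matrix n' n' R).submatrix ⇑σ ⇑(Equiv.refl n')) *
        ((1 : Matrix n' n' R).submatrix ⇑σ.symm ⇑(Equiv.refl n')) = 1 := by
      rw [Matrix.one_submatrix_mul, Matrix.submatrix_submatrix]
      ext i j; simp [Matrix.submatrix_apply, Matrix.one_apply]
    have hP' : ((1 : Matrix n' n' R).submatrix ⇑σ.symm ⇑(Equiv.refl n')) *
        ((1 : Matrix n' n' R).submatrix ⇑σ ⇑(Equiv.refl n')) = 1 := by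
      rw [Matrix.one_submatrix_mul, Matrix.submatrix_submatrix]
      ext i j; simp [Matrix.submatrix_apply, Matrix.one_apply]
    have hPu : IsUnit ((1 : Matrix n' n' R).submatrix ⇑σ ⇑(Equiv.refl n')) :=
      ⟨⟨_, _, hP, hP'⟩, rfl⟩
    have hmul : ((1 : Matrix n' n' R).submatrix ⇑σ ⇑(Equiv.refl n')) * M
        = M.submatrix ⇑σ id := by
      rw [Matrix.one_submatrix_mul]
      simp [Function.comp_def]
    rw [← hmul]
    exact hPu.mul hM
  constructor
  · intro hs
    have := key e.symm _ hs
    rw [Matrix.submatrix_submatrix] at this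
    simpa [Equiv.self_comp_symm] using this
  · exact key e α

open Matrix Fin in
lemma blk_b {R : Type*} [Ring R] {n : ℕ} {β : Matrix (Fin (n+1)) (Fin (n+1)) R}
    (hu : IsUnit (β 0 0)) (hr : ∀ j : Fin (n+1), j ≠ 0 → β 0 j = 0)
    (hc : ∀ i : Fin (n+1), i ≠ 0 → β i 0 = 0)
    (hm : IsUnit (β.submatrix Fin.succ Fin.succ)) : IsUnit β := by
  obtain ⟨U, hU⟩ := hu
  obtain ⟨V, hV⟩ := hm
  set Vi : Matrix (Fin n) (Fin n) R := (V⁻¹).val with hVi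
  set G : Matrix (Fin (n+1)) (Fin (n+1)) R := fun i =>
    Fin.cases (Fin.cases ((↑U⁻¹ : R)) (fun _ => 0))
      (fun i' => Fin.cases 0 (fun j' => Vi i' j')) i with hG
  have hG00 : G 0 0 = (↑U⁻¹ : R) := by simp [hG]
  have hG0s : ∀ j : Fin n, G 0 j.succ = 0 := fun j => by simp [hG]
  have hGs0 : ∀ i : Fin n, G i.succ 0 = 0 := fun i => by simp [hG]
  have hGss : ∀ (i j : Fin n), G i.succ j.succ = Vi i j := fun i j => by simp [hG]
  refine ⟨⟨β, G, ?_, ?_⟩, rfl⟩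
  · ext i j
    rw [Matrix.mul_apply, Fin.sum_univ_succ]
    rcases Fin.eq_zero_or_eq_succ i with rfl | ⟨i', rfl⟩ <;>
      rcases Fin.eq_zero_or_eq_succ j with rfl | ⟨j', rfl⟩
    · simp [hG00, hG0s, hGs0, ← hU, Matrix.one_apply]
    · simp only [hG0s, hGss, mul_zero, zero_add]
      rw [Finset.sum_eq_zero (fun m _ => by rw [hr m.succ (Fin.succ_ne_zero m), zero_mul])]
      simp [Matrix.one_apply, (Fin.succ_ne_zero j').symm]
    · simp only [hG00, hGs0, mul_zero, hc i'.succ (Fin.succ_ne_zero i')]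
      simp [Matrix.one_apply, Fin.succ_ne_zero i']
    · rw [hG0s, mul_zero, zero_add]
      have : ∑ m : Fin n, β i'.succ m.succ * G m.succ j'.succ
          = ((β.submatrix Fin.succ Fin.succ) * Vi) i' j' := by
        rw [Matrix.mul_apply]
        exact Finset.sum_congr rfl fun m _ => by rw [hGss, Matrix.submatrix_apply]
      rw [this, hVi, ← hV, Units.mul_inv]
      simp [Matrix.one_apply, Fin.succ_inj]
  · ext i j
    rw [Matrix.mul_apply, Fin.sum_univ_succ]
    rcases Fin.eq_zero_or_eq_succ i with rfl | ⟨i', rfl⟩ <;>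
      rcases Fin.eq_zero_or_eq_succ j with rfl | ⟨j', rfl⟩
    · simp [hG00, hG0s, hGs0, ← hU, Matrix.one_apply]
    · simp only [hG00, hG0s]
      rw [hr j'.succ (Fin.succ_ne_zero j'), mul_zero, zero_add,
        Finset.sum_eq_zero (fun m _ => by simp [hG0s])]
      simp [Matrix.one_apply, (Fin.succ_ne_zero j').symm]
    · simp only [hGs0, zero_mul, zero_add]
      rw [Finset.sum_eq_zero (fun m _ => by rw [hc m.succ (Fin.succ_ne_zero m), mul_zero])]
      simp [Matrix.one_apply, Fin.succ_ne_zero i']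
    · rw [hGs0, zero_mul, zero_add]
      have : ∑ m : Fin n, G i'.succ m.succ * β m.succ j'.succ
          = (Vi * (β.submatrix Fin.succ Fin.succ)) i' j' := by
        rw [Matrix.mul_apply]
        exact Finset.sum_congr rfl fun m _ => by rw [hGss, Matrix.submatrix_apply]
      rw [this, hVi, ← hV, Units.inv_mul]
      simp [Matrix.one_apply, Fin.succ_inj]

open Matrix Fin in
lemma blk_a {R : Type*} [Ring R] {n : ℕ} {β : Matrix (Fin (n+1)) (Fin (n+1)) R}
    (hu : IsUnit (β 0 0)) (hr : ∀ j : Fin (n+1), j ≠ 0 → β 0 j = 0)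
    (hc : ∀ i : Fin (n+1), i ≠ 0 → β i 0 = 0)
    (hβ : IsUnit β) : IsUnit (β.submatrix Fin.succ Fin.succ) := by
  obtain ⟨U, hU⟩ := hu
  obtain ⟨W, hW⟩ := hβ
  set G : Matrix (Fin (n+1)) (Fin (n+1)) R := (W⁻¹).val with hG
  have hβG : β * G = 1 := by rw [hG, ← hW]; exact W.mul_inv
  have hGβ : G * β = 1 := by rw [hG, ← hW]; exact W.inv_mul
  have G0 : ∀ j : Fin (n+1), j ≠ 0 → G 0 j = 0 := by
    intro j hj
    have h1 : (β * G) 0 j = 0 := by rw [hβG]; simp [Matrix.one_apply, hj.symm]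
    rw [Matrix.mul_apply, Finset.sum_eq_single 0 (fun m _ hm => by rw [hr m hm, zero_mul])
      (fun hmem => absurd (Finset.mem_univ _) hmem), ← hU] at h1
    calc G 0 j = ↑U⁻¹ * (↑U * G 0 j) := by rw [← mul_assoc, U.inv_mul, one_mul]
    _ = 0 := by rw [h1, mul_zero]
  have Gc : ∀ i : Fin (n+1), i ≠ 0 → G i 0 = 0 := by
    intro i hi
    have h1 : (G * β) i 0 = 0 := by rw [hGβ]; simp [Matrix.one_apply, hi]
    rw [Matrix.mul_apply, Finset.sum_eq_single 0 (fun m _ hm => by rw [hc m hm, mul_zero])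
      (fun hmem => absurd (Finset.mem_univ _) hmem), ← hU] at h1
    calc G i 0 = (G i 0 * ↑U) * ↑U⁻¹ := by rw [mul_assoc, U.mul_inv, mul_one]
    _ = 0 := by rw [h1, zero_mul]
  refine ⟨⟨β.submatrix Fin.succ Fin.succ, G.submatrix Fin.succ Fin.succ, ?_, ?_⟩, rfl⟩
  · ext i j
    have h1 : (β * G) i.succ j.succ = (1 : Matrix (Fin (n+1)) (Fin (n+1)) R) i.succ j.succ := by
      rw [hβG]
    rw [Matrix.mul_apply, Fin.sum_univ_succ, G0 j.succ (Fin.succ_ne_zero j), mul_zero,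
      zero_add] at h1
    rw [Matrix.mul_apply]
    simp only [Matrix.submatrix_apply]
    rw [h1]
    simp [Matrix.one_apply, Fin.succ_inj]
  · ext i j
    have h1 : (G * β) i.succ j.succ = (1 : Matrix (Fin (n+1)) (Fin (n+1)) R) i.succ j.succ := by
      rw [hGβ]
    rw [Matrix.mul_apply, Fin.sum_univ_succ, Gc i.succ (Fin.succ_ne_zero i), zero_mul,
      zero_add] at h1
    rw [Matrix.mul_apply]
    simp only [Matrix.submatrix_apply]
    rw [h1]
    simp [Matrix.one_apply, Fin.succ_inj]

lemma aux_sq_zero_unit {R : Type*} [Ring R] {n' : Type*} [Fintype n'] [DecidableEq n']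
    (c : Matrix n' n' R) (hcc : c * c = 0) : IsUnit (1 + c) := by
  refine ⟨⟨1 + c, 1 - c, ?_, ?_⟩, rfl⟩
  · have h1 : (1 + c) * (1 - c) = 1 - c * c := by noncomm_ring
    rw [h1, hcc, sub_zero]
  · have h1 : (1 - c) * (1 + c) = 1 - c * c := by noncomm_ring
    rw [h1, hcc, sub_zero]


end AuxStmt5

/-- If `B` is a local ring, `A` is nonzero and `f⁻¹(rad A) = rad B`, then `f` is a
local homomorphism. -/
theorem stmt5 {B A : Type*} [Ring B] [Ring A] [IsLocalRing B] [Nontrivial A]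
    (f : B →+* A)
    (h : ∀ x : B, f x ∈ Ideal.jacobson (⊥ : Ideal A) ↔ x ∈ Ideal.jacobson (⊥ : Ideal B)) :
    MatLocal f := by
  intro n
  induction n with
  | zero => exact fun α _ => isUnit_of_subsingleton α
  | succ n IH =>
    intro α hα
    -- Step 1: find a unit entry in column 0
    have hpiv : ∃ i, IsUnit (α i 0) := by
      by_contra hno
      push_neg at hno
      have hrad : ∀ i, f (α i 0) ∈ Ideal.jacobson (⊥ : Ideal A) :=
        fun i => (h _).mpr (aux_rad (hno i))
      obtain ⟨W, hW⟩ := hα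
      have h1 : ((W⁻¹).val * α.map f) 0 0 = (1 : A) := by
        rw [← hW, W.inv_mul]; simp [Matrix.one_apply]
      rw [Matrix.mul_apply] at h1
      have hmem : (1 : A) ∈ Ideal.jacobson (⊥ : Ideal A) := by
        rw [← h1]
        refine Ideal.sum_mem _ (fun m _ => Ideal.mul_mem_left _ _ ?_)
        rw [Matrix.map_apply]
        exact hrad m
      exact aux_one_notmem hmem
    obtain ⟨i, hi⟩ := hpiv
    set σ := Equiv.swap (0 : Fin (n+1)) i with hσ
    set M := α.submatrix ⇑σ id with hMdef
    have hM00 : IsUnit (M 0 0) := by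
      simpa [hMdef, hσ, Equiv.swap_apply_left] using hi
    set U := hM00.unit with hUdef
    have hU : (↑U : B) = M 0 0 := rfl
    -- elimination matrices
    set c : Matrix (Fin (n+1)) (Fin (n+1)) B :=
      fun k j => if j = 0 ∧ k ≠ 0 then -(M k 0 * ↑U⁻¹) else 0 with hcdef
    have hcc : c * c = 0 := by
      ext k j
      rw [Matrix.mul_apply, Matrix.zero_apply]
      apply Finset.sum_eq_zero
      intro m _
      by_cases hm : m = 0
      · subst hm
        have hz : c 0 j = 0 := by simp [hcdef]
        rw [hz, mul_zero]
      · have hz : c k m = 0 := by simp [hcdef, hm]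
        rw [hz, zero_mul]
    have hL : IsUnit ((1 : Matrix (Fin (n+1)) (Fin (n+1)) B) + c) := aux_sq_zero_unit c hcc
    set N := ((1 : Matrix (Fin (n+1)) (Fin (n+1)) B) + c) * M with hNdef
    have hcM : ∀ k j, (c * M) k j = c k 0 * M 0 j := by
      intro k j
      rw [Matrix.mul_apply]
      exact Finset.sum_eq_single 0 (fun m _ hm => by simp [hcdef, hm])
        (fun hmem => absurd (Finset.mem_univ _) hmem)
    have hN : ∀ k j, N k j = M k j + c k 0 * M 0 j := by
      intro k j
      rw [hNdef, add_mul, one_mul, Matrix.add_apply, hcM]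
    have hN0j : ∀ j, N 0 j = M 0 j := by
      intro j
      rw [hN]
      have : c 0 0 = 0 := by simp [hcdef]
      rw [this, zero_mul, add_zero]
    have hNk0 : ∀ k, k ≠ 0 → N k 0 = 0 := by
      intro k hk
      rw [hN]
      have hck : c k 0 = -(M k 0 * ↑U⁻¹) := by simp [hcdef, hk]
      rw [hck, ← hU, neg_mul, mul_assoc, U.inv_mul, mul_one, add_neg_cancel]
    have hN00 : N 0 0 = (↑U : B) := by rw [hN0j, ← hU]
    set d : Matrix (Fin (n+1)) (Fin (n+1)) B :=
      fun k j => if k = 0 ∧ j ≠ 0 then -(↑U⁻¹ * N 0 j) else 0 with hddef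
    have hdd : d * d = 0 := by
      ext k j
      rw [Matrix.mul_apply, Matrix.zero_apply]
      apply Finset.sum_eq_zero
      intro m _
      by_cases hm : m = 0
      · subst hm
        have hz : d k 0 = 0 := by simp [hddef]
        rw [hz, zero_mul]
      · have hz : d m j = 0 := by simp [hddef, hm]
        rw [hz, mul_zero]
    have hR : IsUnit ((1 : Matrix (Fin (n+1)) (Fin (n+1)) B) + d) := aux_sq_zero_unit d hdd
    set β := N * ((1 : Matrix (Fin (n+1)) (Fin (n+1)) B) + d) with hβdef
    have hNd : ∀ k j, (N * d) k j = N k 0 * d 0 j := by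
      intro k j
      rw [Matrix.mul_apply]
      exact Finset.sum_eq_single 0 (fun m _ hm => by simp [hddef, hm])
        (fun hmem => absurd (Finset.mem_univ _) hmem)
    have hβa : ∀ k j, β k j = N k j + N k 0 * d 0 j := by
      intro k j
      rw [hβdef, mul_add, mul_one, Matrix.add_apply, hNd]
    have hβk0 : ∀ k, β k 0 = N k 0 := by
      intro k
      rw [hβa]
      have : d 0 0 = 0 := by simp [hddef]
      rw [this, mul_zero, add_zero]
    have hβ00 : β 0 0 = (↑U : B) := by rw [hβk0, hN00]
    have hβc : ∀ k : Fin (n+1), k ≠ 0 → β k 0 = 0 := fun k hk => by rw [hβk0, hNk0 k hk]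
    have hβr : ∀ j : Fin (n+1), j ≠ 0 → β 0 j = 0 := by
      intro j hj
      rw [hβa, hN00]
      have hdj : d 0 j = -(↑U⁻¹ * N 0 j) := by simp [hddef, hj]
      rw [hdj, mul_neg, Units.mul_inv_cancel_left, add_neg_cancel]
    -- map to A
    have hMf : IsUnit (M.map f) := by
      rw [hMdef, ← Matrix.submatrix_map]
      exact (aux_submatrix_unit σ (α.map f)).mpr hα
    have hLf : IsUnit (((1 : Matrix (Fin (n+1)) (Fin (n+1)) B) + c).map f) := by
      have hmap : ((1 : Matrix (Fin (n+1)) (Fin (n+1)) B) + c).map f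
          = 1 + c.map f := by
        rw [Matrix.map_add f (fun a b => f.map_add a b), Matrix.map_one f f.map_zero f.map_one]
      rw [hmap]
      exact aux_sq_zero_unit _ (by rw [← Matrix.map_mul, hcc, Matrix.map_zero f f.map_zero])
    have hRf : IsUnit (((1 : Matrix (Fin (n+1)) (Fin (n+1)) B) + d).map f) := by
      have hmap : ((1 : Matrix (Fin (n+1)) (Fin (n+1)) B) + d).map f
          = 1 + d.map f := by
        rw [Matrix.map_add f (fun a b => f.map_add a b), Matrix.map_one f f.map_zero f.map_one]
      rw [hmap]
      exact aux_sq_zero_unit _ (by rw [← Matrix.map_mul, hdd, Matrix.map_zero f f.map_zero])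
    have hβf : IsUnit (β.map f) := by
      rw [hβdef, hNdef, Matrix.map_mul, Matrix.map_mul]
      exact (hLf.mul hMf).mul hRf
    -- apply blk_a to β.map f
    have hminor_f : IsUnit ((β.submatrix Fin.succ Fin.succ).map f) := by
      rw [← Matrix.submatrix_map]
      refine blk_a ?_ ?_ ?_ hβf
      · rw [Matrix.map_apply, hβ00]; exact U.isUnit.map f
      · intro j hj; rw [Matrix.map_apply, hβr j hj, f.map_zero]
      · intro i hi; rw [Matrix.map_apply, hβc i hi, f.map_zero]
    have hminor : IsUnit (β.submatrix Fin.succ Fin.succ) := IH _ hminor_f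
    have hβu : IsUnit β := blk_b (hβ00 ▸ U.isUnit) hβr hβc hminor
    -- unwind
    have hMu : IsUnit M := by
      obtain ⟨LU, hLU⟩ := hL
      obtain ⟨RU, hRU⟩ := hR
      have hβu' : IsUnit (LU.val * M * RU.val) := by
        rw [hLU, hRU, ← hNdef, ← hβdef]; exact hβu
      have h3 : (LU⁻¹).val * (LU.val * M * RU.val) * (RU⁻¹).val = M := by
        calc (LU⁻¹).val * (LU.val * M * RU.val) * (RU⁻¹).val
            = ((LU⁻¹).val * LU.val) * M * (RU.val * (RU⁻¹).val) := by noncomm_ring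
          _ = M := by rw [Units.inv_mul, Units.mul_inv, one_mul, mul_one]
      have h4 := (LU⁻¹.isUnit.mul hβu').mul RU⁻¹.isUnit
      rwa [h3] at h4
    exact (aux_submatrix_unit σ α).mp (hMdef ▸ hMu)
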